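/- Let α, β, γ, δ be reals with γ, δ > 0 and (α−β)² < (γ+δ)², and set s = (α−β)/(γ+δ), c = √(1−s²). The symmetric matrix Σ̃ = [[γc, α − δs],[α − δs, δc]] satisfies (Σ̃ − Ãᵀ)(Σ̃ − Ã) = diag(γ², δ²) where Ã = [[0,α],[β,0]], provided additionally γ² = κ η_x + β² and δ² = κ η_p + α² for some κ > 0 with η_x, η_p ∈ (0,1]. -/

import Mathlib

open Matrix

theorem stmt_4 (α β γ δ κ ηx ηp : ℝ) (hγ : 0 < γ) (hδ : 0 < δ)
    (h : (α - β) ^ 2 < (γ + δ) ^ 2) (hκ : 0 < κ)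
    (hηx : 0 < ηx) (hηx1 : ηx ≤ 1) (hηp : 0 < ηp) (hηp1 : ηp ≤ 1)
    (hγ2 : γ ^ 2 = κ * ηx + β ^ 2) (hδ2 : δ ^ 2 = κ * ηp + α ^ 2) :
    let s := (α - β) / (γ + δ)
    let c := Real.sqrt (1 - s ^ 2)
    let St : Matrix (Fin 2) (Fin 2) ℝ := !![γ * c, α - δ * s; α - δ * s, δ * c]
    let At : Matrix (Fin 2) (Fin 2) ℝ := !![0, α; β, 0]
    (St - Atᵀ) * (St - At) = !![γ ^ 2, 0; 0, δ ^ 2] := by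
  intro s c St At
  have hγδ : 0 < γ + δ := by linarith
  have hs : (γ + δ) * s = α - β := by
    show (γ + δ) * ((α - β) / (γ + δ)) = α - β; field_simp [hγδ.ne']
  have h2 : (γ + δ) ^ 2 * s ^ 2 = (α - β) ^ 2 := by
    linear_combination ((γ + δ) * s + α - β) * hs
  have hs2 : s ^ 2 ≤ 1 := by
    have h3 : (γ + δ) ^ 2 * s ^ 2 < (γ + δ) ^ 2 * 1 := by
      rw [h2, mul_one]; exact h
    exact le_of_lt (lt_of_mul_lt_mul_left h3 (by positivity))
  have hc2 : c ^ 2 = 1 - s ^ 2 := Real.sq_sqrt (by linarith)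
  have hab : α - δ * s - β = γ * s := by nlinarith
  ext i j
  fin_cases i <;> fin_cases j
  · simp [St, At, Matrix.mul_apply, Fin.sum_univ_succ, Matrix.vecHead, Matrix.vecTail]
    linear_combination γ ^ 2 * hc2 + (α - δ * s - β + γ * s) * hab
  · simp [St, At, Matrix.mul_apply, Fin.sum_univ_succ, Matrix.vecHead, Matrix.vecTail]
    linear_combination δ * c * hab
  · simp [St, At, Matrix.mul_apply, Fin.sum_univ_succ, Matrix.vecHead, Matrix.vecTail]
    linear_combination δ * c * hab
  · simp [St, At, Matrix.mul_apply, Fin.sum_univ_succ, Matrix.vecHead, Matrix.vecTail]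
    linear_combination δ ^ 2 * hc2
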